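/- arXiv:2508.11112 — 8 statements merged into one kernel-verified Lean document; each statement's English description precedes it below -/
import Mathlib

section
/- Let d, n be positive integers, let M be a real d×n matrix, let Q ⊆ ℝ be an arbitrary set, and let S ⊆ ℝ be a finite set. Suppose x ∈ ℝ^d and δ ∈ ℝ^n are such that for every coordinate i with x_i ∉ Q one has (Mδ)_i ∈ S. Assume the following general-position condition: for every index set I ⊆ {1,…,d} with |I| = n+1 and every vector v ∈ ℝ^d whose entries v_i lie in S for all i ∈ I, there is no c ∈ ℝ^n with (Mc)_i = v_i for all i ∈ I. Then the number of coordinates i with x_i ∉ Q is at most n; equivalently, at least d − n coordinates of x lie in Q. -/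
/-- Deterministic core of the quantization guarantee.
If at every non-quantized coordinate `i` (i.e. `x i ∉ Q`) the vector `M.mulVec δ`
takes values in the finite set `S`, and the matrix `M` is in general position with
respect to `S` (no `n+1` rows of `M` can simultaneously match a vector with entries
in `S`), then at most `n` coordinates of `x` are non-quantized. -/
theorem par_quantization_deterministic
    (d n : ℕ) (hd : 0 < d) (hn : 0 < n)
    (M : Matrix (Fin d) (Fin n) ℝ) (Q : Set ℝ) (S : Finset ℝ)
    (x : Fin d → ℝ) (δ : Fin n → ℝ)
    (hx : ∀ i : Fin d, x i ∉ Q → M.mulVec δ i ∈ S)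
    (hgen : ∀ I : Finset (Fin d), I.card = n + 1 →
      ∀ v : Fin d → ℝ, (∀ i ∈ I, v i ∈ S) →
        ¬ ∃ c : Fin n → ℝ, ∀ i ∈ I, M.mulVec c i = v i) :
    {i : Fin d | x i ∉ Q}.ncard ≤ n := by
  by_contra h
  push_neg at h
  classical
  rw [show {i : Fin d | x i ∉ Q} = ↑({i : Fin d | x i ∉ Q}.toFinset) by simp,
    Set.ncard_coe_finset] at h
  obtain ⟨I, hIsub, hIcard⟩ := Finset.exists_subset_card_eq (h : n + 1 ≤ _)
  exact hgen I hIcard (M.mulVec δ)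
    (fun i hi => hx i (by simpa using hIsub hi)) ⟨δ, fun i _ => rfl⟩
end

section
/- Let d, n be positive integers and let μ be a probability measure on ℝ^d that is absolutely continuous with respect to d-dimensional Lebesgue measure. Let a_1, …, a_n be i.i.d. random vectors with law μ (i.e., consider the product measure μ^{⊗n} on (ℝ^d)^n), forming the rows of a random matrix A ∈ ℝ^{n×d}. Let Q ⊆ ℝ be an arbitrary set and let S ⊆ ℝ be a finite set with 0 ∉ S. Then for μ^{⊗n}-almost every (a_1,…,a_n) the following holds: for every λ > 0, every x ∈ ℝ^d and every δ ∈ ℝ^n such that for each coordinate i with x_i ∉ Q one has (A^T δ)_i ∈ λ·S := {λs : s ∈ S}, the number of coordinates i with x_i ∉ Q is at most n. Equivalently, with probability one, every such point x has quantization rate qr(x) := |{i : x_i ∈ Q}|/d ≥ 1 − n/d. -/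
open MeasureTheory

open Set


lemma fin_cons_snoc {k : ℕ} {V : Type*} (v : V) (c : Fin k → V) (y : V) :
    (Fin.cons v (Fin.snoc c y) : Fin (k + 2) → V)
      = Fin.snoc (Fin.cons v c : Fin (k + 1) → V) y := by
  funext i
  refine Fin.cases ?_ (fun j => ?_) i
  · rw [Fin.cons_zero, ← Fin.castSucc_zero, Fin.snoc_castSucc, Fin.cons_zero]
  · refine Fin.lastCases ?_ (fun t => ?_) j
    · rw [Fin.cons_succ, Fin.snoc_last, Fin.succ_last, Fin.snoc_last]
    · rw [Fin.cons_succ, Fin.snoc_castSucc, Fin.succ_castSucc, Fin.snoc_castSucc, Fin.cons_succ]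

lemma aux_indep {m : ℕ} {Ω : Type*} [MeasurableSpace Ω] (μ : Measure Ω)
    [IsProbabilityMeasure μ] (r : Ω → (Fin m → ℝ)) (hr : Measurable r)
    (hμW : ∀ W : Submodule ℝ (Fin m → ℝ), W ≠ ⊤ → μ {ω | r ω ∈ W} = 0) :
    ∀ k : ℕ, k < m → ∀ v : Fin m → ℝ, v ≠ 0 →
      (Measure.pi fun _ : Fin k => μ)
        {b | ¬ LinearIndependent ℝ (Fin.cons v (r ∘ b) : Fin (k + 1) → Fin m → ℝ)} = 0 := by
  intro k
  induction k with
  | zero =>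
    intro _ v hv
    have h : {b : Fin 0 → Ω | ¬ LinearIndependent ℝ
        (Fin.cons v (r ∘ b) : Fin 1 → Fin m → ℝ)} = ∅ := by
      ext b
      simp only [mem_setOf_eq, mem_empty_iff_false, iff_false, not_not]
      exact linearIndependent_fin_cons.2
        ⟨linearIndependent_empty_type, by
          simp [Set.range_eq_empty, Submodule.span_empty, hv]⟩
    rw [h]
    exact measure_empty
  | succ k IH =>
    intro hk v hv
    have hk' : k < m := Nat.lt_of_succ_lt hk
    set ρ := Measure.pi fun _ : Fin k => μ with hρ
    -- measurability of the "dependent family" sets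
    have hclosed : ∀ l : ℕ, MeasurableSet {f : Fin l → Fin m → ℝ | ¬ LinearIndependent ℝ f} := by
      intro l
      have : {f : Fin l → Fin m → ℝ | ¬ LinearIndependent ℝ f}
          = {f : Fin l → Fin m → ℝ | LinearIndependent ℝ f}ᶜ := rfl
      rw [this]
      exact (isOpen_setOf_linearIndependent.measurableSet).compl
    have hΦ : Measurable fun p : Ω × (Fin k → Ω) =>
        (Fin.snoc (Fin.cons v (r ∘ p.2)) (r p.1) : Fin (k + 2) → Fin m → ℝ) := by
      apply measurable_pi_lambda
      intro i
      refine Fin.lastCases ?_ (fun t => ?_) i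
      · simp only [Fin.snoc_last]
        exact hr.comp measurable_fst
      · simp only [Fin.snoc_castSucc]
        refine Fin.cases ?_ (fun u => ?_) t
        · simp only [Fin.cons_zero]; exact measurable_const
        · simp only [Fin.cons_succ]
          exact hr.comp ((measurable_pi_apply u).comp measurable_snd)
    have hΦ1 : Measurable fun p : Ω × (Fin k → Ω) =>
        (Fin.cons v (r ∘ p.2) : Fin (k + 1) → Fin m → ℝ) := by
      apply measurable_pi_lambda
      intro t
      refine Fin.cases ?_ (fun u => ?_) t
      · simp only [Fin.cons_zero]; exact measurable_const
      · simp only [Fin.cons_succ]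
        exact hr.comp ((measurable_pi_apply u).comp measurable_snd)
    set E' : Set (Ω × (Fin k → Ω)) :=
      (fun p : Ω × (Fin k → Ω) =>
        (Fin.snoc (Fin.cons v (r ∘ p.2)) (r p.1) : Fin (k + 2) → Fin m → ℝ)) ⁻¹'
        {f | ¬ LinearIndependent ℝ f} with hE'def
    set E1 : Set (Ω × (Fin k → Ω)) :=
      (fun p : Ω × (Fin k → Ω) => (Fin.cons v (r ∘ p.2) : Fin (k + 1) → Fin m → ℝ)) ⁻¹'
        {f | ¬ LinearIndependent ℝ f} with hE1def
    have hE'm : MeasurableSet E' := (hclosed _).preimage hΦ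
    have hE1m : MeasurableSet E1 := (hclosed _).preimage hΦ1
    -- transfer to the product space
    have MP := measurePreserving_piFinSuccAbove (fun _ : Fin (k + 1) => μ) (Fin.last k)
    have hset : {b : Fin (k + 1) → Ω | ¬ LinearIndependent ℝ
          (Fin.cons v (r ∘ b) : Fin (k + 2) → Fin m → ℝ)}
        = (MeasurableEquiv.piFinSuccAbove (fun _ : Fin (k + 1) => Ω) (Fin.last k)) ⁻¹' E' := by
      ext b
      simp only [mem_setOf_eq, mem_preimage, hE'def, MeasurableEquiv.piFinSuccAbove,
        MeasurableEquiv.coe_mk, Equiv.symm_symm]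
      have : (Fin.snoc (Fin.cons v (r ∘ fun i => b ((Fin.last k).succAbove i)))
            (r (b (Fin.last k))) : Fin (k + 2) → Fin m → ℝ)
          = (Fin.cons v (r ∘ b) : Fin (k + 2) → Fin m → ℝ) := by
        have h2 : (Fin.snoc (r ∘ fun i => b ((Fin.last k).succAbove i))
            (r (b (Fin.last k))) : Fin (k + 1) → Fin m → ℝ) = r ∘ b := by
          funext j
          refine Fin.lastCases ?_ (fun t => ?_) j
          · simp
          · simp [Fin.succAbove_last]
        rw [← fin_cons_snoc, h2]
      exact this ▸ Iff.rfl
    rw [hset, MP.measure_preimage hE'm.nullMeasurableSet]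
    have hsplit : E' ⊆ E1 ∪ (E' \ E1) := by
      intro p hp
      by_cases h : p ∈ E1
      · exact Or.inl h
      · exact Or.inr ⟨hp, h⟩
    refine le_antisymm ?_ zero_le
    refine le_trans (measure_mono hsplit) ?_
    refine le_trans (measure_union_le _ _) ?_
    have h1 : (μ.prod ρ) E1 = 0 := by
      rw [Measure.prod_apply hE1m]
      have hsec : ∀ ω : Ω, (Prod.mk ω ⁻¹' E1)
          = {b : Fin k → Ω | ¬ LinearIndependent ℝ
              (Fin.cons v (r ∘ b) : Fin (k + 1) → Fin m → ℝ)} := fun ω => rfl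
      simp only [hsec]
      rw [lintegral_const, IH hk' v hv, zero_mul]
    have h2 : (μ.prod ρ) (E' \ E1) = 0 := by
      rw [Measure.prod_apply_symm (hE'm.diff hE1m)]
      have hz : ∀ b : Fin k → Ω, μ ((fun ω : Ω => (ω, b)) ⁻¹' (E' \ E1)) = 0 := by
        intro b
        by_cases hb : LinearIndependent ℝ (Fin.cons v (r ∘ b) : Fin (k + 1) → Fin m → ℝ)
        · have hW : Submodule.span ℝ
              (Set.range (Fin.cons v (r ∘ b) : Fin (k + 1) → Fin m → ℝ)) ≠ ⊤ := by
            intro htop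
            have hle := finrank_range_le_card (R := ℝ)
              (Fin.cons v (r ∘ b) : Fin (k + 1) → Fin m → ℝ)
            rw [Set.finrank, htop, finrank_top, Module.finrank_fin_fun, Fintype.card_fin] at hle
            omega
          refine measure_mono_null ?_ (hμW _ hW)
          intro ω hω
          obtain ⟨hωE', hωE1⟩ := hω
          simp only [mem_setOf_eq]
          by_contra hno
          exact hωE' (linearIndependent_fin_snoc.2 ⟨hb, hno⟩)
        · have hemp : ((fun ω : Ω => (ω, b)) ⁻¹' (E' \ E1)) = ∅ := by
            ext ω
            simp only [mem_preimage, mem_diff, mem_empty_iff_false, iff_false]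
            intro hω
            exact hω.2 hb
          rw [hemp]
          exact measure_empty
      rw [lintegral_congr hz, lintegral_zero]
    rw [h1, h2, add_zero]


/-- Quantization guarantee for generalized linear models (Theorem 2.1).
For i.i.d. rows `a 1, …, a n` drawn from a distribution absolutely continuous with
respect to Lebesgue measure on `ℝ^d`, almost surely: for every `λ > 0`, every `x` and
every `δ` such that at each non-quantized coordinate `i` the entry `(Aᵀδ)_i = ∑ j, δ j * a j i`
lies in `λ·S` (with `0 ∉ S` finite), the number of non-quantized coordinates is at most `n`. -/
theorem par_quantization_glm
    (d n : ℕ) (hd : 0 < d) (hn : 0 < n)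
    (μ : Measure (Fin d → ℝ)) [IsProbabilityMeasure μ]
    (hμ : μ ≪ (volume : Measure (Fin d → ℝ)))
    (Q : Set ℝ) (S : Finset ℝ) (hS : (0 : ℝ) ∉ S) :
    ∀ᵐ a : Fin n → (Fin d → ℝ) ∂(Measure.pi fun _ : Fin n => μ),
      ∀ lam : ℝ, 0 < lam →
        ∀ x : Fin d → ℝ, ∀ δ : Fin n → ℝ,
          (∀ i : Fin d, x i ∉ Q → ∃ s ∈ S, (∑ j : Fin n, δ j * a j i) = lam * s) →
          {i : Fin d | x i ∉ Q}.ncard ≤ n := by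
  classical
  have key : ∀ (e : Fin (n + 1) ↪ Fin d) (s : Fin (n + 1) → {z : ℝ // z ∈ S}),
      (Measure.pi fun _ : Fin n => μ)
        {a : Fin n → (Fin d → ℝ) | ¬ LinearIndependent ℝ
          (Fin.cons (fun i => (s i : ℝ)) ((fun ω : Fin d → ℝ => fun i => ω (e i)) ∘ a)
            : Fin (n + 1) → Fin (n + 1) → ℝ)} = 0 := by
    intro e s
    have hrs : Measurable (fun ω : Fin d → ℝ => (fun i => ω (e i) : Fin (n + 1) → ℝ)) :=
      measurable_pi_lambda _ fun i => measurable_pi_apply _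
    have hμW : ∀ W : Submodule ℝ (Fin (n + 1) → ℝ), W ≠ ⊤ →
        μ {ω : Fin d → ℝ | (fun i => ω (e i)) ∈ W} = 0 := by
      intro W hW
      have hsurj : Function.Surjective (LinearMap.funLeft ℝ ℝ e) :=
        LinearMap.funLeft_surjective_of_injective ℝ ℝ e e.injective
      set W' : Submodule ℝ (Fin d → ℝ) := W.comap (LinearMap.funLeft ℝ ℝ e) with hW'def
      have hW' : W' ≠ ⊤ := by
        intro h
        apply hW
        rw [eq_top_iff]
        intro y _
        obtain ⟨z, rfl⟩ := hsurj y
        have hz : z ∈ W' := h ▸ Submodule.mem_top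
        exact hz
      have hvol : (volume : Measure (Fin d → ℝ)) (W' : Set (Fin d → ℝ)) = 0 :=
        Measure.addHaar_submodule _ _ hW'
      refine measure_mono_null ?_ (hμ hvol)
      intro ω hω
      exact hω
    have hv : (fun i => (s i : ℝ)) ≠ (0 : Fin (n + 1) → ℝ) := by
      intro h
      have h0 : ((s 0 : ℝ)) = 0 := congrFun h 0
      exact hS (h0 ▸ (s 0).2)
    exact aux_indep μ _ hrs hμW n (Nat.lt_succ_self n) _ hv
  have hae : ∀ᵐ a : Fin n → (Fin d → ℝ) ∂(Measure.pi fun _ : Fin n => μ),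
      ∀ (e : Fin (n + 1) ↪ Fin d) (s : Fin (n + 1) → {z : ℝ // z ∈ S}),
        LinearIndependent ℝ
          (Fin.cons (fun i => (s i : ℝ)) ((fun ω : Fin d → ℝ => fun i => ω (e i)) ∘ a)
            : Fin (n + 1) → Fin (n + 1) → ℝ) := by
    rw [ae_all_iff]
    intro e
    rw [ae_all_iff]
    intro s
    rw [ae_iff]
    exact key e s
  filter_upwards [hae] with a ha lam hlam x δ hcond
  by_contra hcard
  push_neg at hcard
  have hsub : n + 1 ≤ {i : Fin d | x i ∉ Q}.ncard := hcard
  obtain ⟨T, hTsub, hTcard⟩ := Set.exists_subset_card_eq hsub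
  have hTfin : T.Finite := Set.toFinite T
  have hF : hTfin.toFinset.card = n + 1 := by
    rw [← Set.ncard_eq_toFinset_card T hTfin, hTcard]
  set F := hTfin.toFinset with hFdef
  let e0 := F.orderIsoOfFin hF
  let e : Fin (n + 1) ↪ Fin d :=
    ⟨fun j => (e0 j : Fin d), fun a b h => e0.injective (Subtype.ext h)⟩
  have hmem : ∀ j : Fin (n + 1), x (e j) ∉ Q := by
    intro j
    have hmemF : (e0 j : Fin d) ∈ F := (e0 j).2
    exact hTsub (hTfin.mem_toFinset.mp hmemF)
  let s : Fin (n + 1) → {z : ℝ // z ∈ S} :=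
    fun j => ⟨(hcond (e j) (hmem j)).choose, (hcond (e j) (hmem j)).choose_spec.1⟩
  have hs : ∀ j : Fin (n + 1), (∑ t : Fin n, δ t * a t (e j)) = lam * (s j : ℝ) :=
    fun j => (hcond (e j) (hmem j)).choose_spec.2
  have hindep := ha e s
  have hnot := (linearIndependent_fin_cons.mp hindep).2
  apply hnot
  have hveq : (fun i => (s i : ℝ))
      = lam⁻¹ • ∑ t : Fin n, δ t • ((fun ω : Fin d → ℝ => fun i => ω (e i)) ∘ a) t := by
    funext i
    simp only [Pi.smul_apply, Finset.sum_apply, Function.comp_apply, Pi.smul_apply,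
      smul_eq_mul]
    exact (eq_inv_mul_iff_mul_eq₀ hlam.ne').mpr (hs i).symm
  rw [hveq]
  refine Submodule.smul_mem _ _ (Submodule.sum_mem _ fun t _ => ?_)
  exact Submodule.smul_mem _ _ (Submodule.subset_span ⟨t, rfl⟩)
end

section
/- Let E be a finite-dimensional real inner product space. Let f : E → ℝ be convex and differentiable with gradient ∇f that is Lipschitz with constant L > 0, let Ψ : E → ℝ be convex, and let λ ≥ 0. Let F_λ = f + λΨ and let x* be a global minimizer of F_λ. Fix a step size η with 0 < η ≤ 1/(2L), and let (x^t)_{t≥0} be a sequence such that for every t, x^{t+1} is a global minimizer of z ↦ ηλΨ(z) + (1/2)‖z − (x^t − η∇f(x^t))‖². Then for every T ≥ 1, F_λ(x^T) − F_λ(x*) ≤ ‖x^0 − x*‖² / (2ηT). -/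
open scoped RealInnerProductSpace

section Aux

variable {E : Type*} [NormedAddCommGroup E] [InnerProductSpace ℝ E]

lemma pg_expand_sq (p q : E) (c : ℝ) :
    ‖p + c • q‖ ^ 2 = ‖p‖ ^ 2 + 2 * c * ⟪q, p⟫ + c ^ 2 * ‖q‖ ^ 2 := by
  rw [norm_add_sq_real, real_inner_smul_right, norm_smul, Real.norm_eq_abs, mul_pow, sq_abs,
    real_inner_comm]
  ring

lemma pg_grad_ineq [CompleteSpace E]
    (f : E → ℝ) (f' : E → E) (hf : ∀ x, HasGradientAt f (f' x) x)
    (hfconv : ConvexOn ℝ Set.univ f) (a u : E) :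
    f a + ⟪f' a, u - a⟫ ≤ f u := by
  set φ : ℝ → ℝ := fun t => f (a + t • (u - a)) with hφ
  have hderiv : ∀ t : ℝ, HasDerivAt φ ⟪f' (a + t • (u - a)), u - a⟫ t := by
    intro t
    have hγ : HasDerivAt (fun s : ℝ => a + s • (u - a)) (u - a) t := by
      simpa using ((hasDerivAt_id t).smul_const (u - a)).const_add a
    have hF := (hasGradientAt_iff_hasFDerivAt.mp (hf (a + t • (u - a))))
    simpa [InnerProductSpace.toDual_apply_apply, hφ, Function.comp_def] using hF.comp_hasDerivAt t hγ
  have hφconv : ConvexOn ℝ Set.univ φ := by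
    have h1 := hfconv.comp_affineMap (AffineMap.lineMap a u)
    have h2 : φ = f ∘ ⇑(AffineMap.lineMap a u : ℝ →ᵃ[ℝ] E) := by
      funext t
      simp only [hφ, Function.comp_apply, AffineMap.lineMap_apply_module]
      congr 1
      module
    rw [h2]
    simpa using h1
  have hslope := hφconv.le_slope_of_hasDerivAt (Set.mem_univ (0:ℝ)) (Set.mem_univ (1:ℝ))
    one_pos (by simpa using hderiv 0)
  have h0 : φ 0 = f a := by simp [hφ]
  have h1 : φ 1 = f u := by simp [hφ]
  rw [slope_def_field] at hslope
  rw [h0, h1] at hslope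
  simp at hslope
  linarith

lemma pg_descent [CompleteSpace E]
    (f : E → ℝ) (f' : E → E) (hf : ∀ x, HasGradientAt f (f' x) x)
    (L : ℝ) (hL : 0 < L) (hlip : ∀ x y, ‖f' x - f' y‖ ≤ L * ‖x - y‖) (a u : E) :
    f u ≤ f a + ⟪f' a, u - a⟫ + L / 2 * ‖u - a‖ ^ 2 := by
  set v := u - a with hv
  set φ : ℝ → ℝ := fun t => f (a + t • v) with hφ
  set ψ : ℝ → ℝ := fun t => ⟪f' (a + t • v), v⟫ with hψ
  have hderiv : ∀ t : ℝ, HasDerivAt φ (ψ t) t := by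
    intro t
    have hγ : HasDerivAt (fun s : ℝ => a + s • v) v t := by
      simpa using ((hasDerivAt_id t).smul_const v).const_add a
    have hF := (hasGradientAt_iff_hasFDerivAt.mp (hf (a + t • v)))
    simpa [InnerProductSpace.toDual_apply_apply, hφ, hψ, Function.comp_def] using hF.comp_hasDerivAt t hγ
  have hf'cont : Continuous f' := by
    have hlw : LipschitzWith (Real.toNNReal L) f' := by
      apply LipschitzWith.of_dist_le_mul
      intro p q
      rw [dist_eq_norm, dist_eq_norm, Real.coe_toNNReal L hL.le]
      exact hlip p q
    exact hlw.continuous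
  have hψcont : Continuous ψ := by
    apply Continuous.inner
    · exact hf'cont.comp (by continuity)
    · exact continuous_const
  have hint : ∫ t in (0:ℝ)..1, ψ t = φ 1 - φ 0 :=
    intervalIntegral.integral_eq_sub_of_hasDerivAt (fun t _ => hderiv t)
      (hψcont.intervalIntegrable 0 1)
  have hb : ∀ t ∈ Set.Icc (0:ℝ) 1, ψ t ≤ ψ 0 + L * ‖v‖ ^ 2 * t := by
    intro t ht
    have h1 : ψ t - ψ 0 = ⟪f' (a + t • v) - f' a, v⟫ := by
      simp [hψ, inner_sub_left]
    have h2 : ⟪f' (a + t • v) - f' a, v⟫ ≤ ‖f' (a + t • v) - f' a‖ * ‖v‖ :=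
      real_inner_le_norm _ _
    have h3 : ‖f' (a + t • v) - f' a‖ ≤ L * (t * ‖v‖) := by
      have := hlip (a + t • v) a
      simpa [norm_smul, Real.norm_eq_abs, abs_of_nonneg ht.1] using this
    have h4 : ‖f' (a + t • v) - f' a‖ * ‖v‖ ≤ L * (t * ‖v‖) * ‖v‖ :=
      mul_le_mul_of_nonneg_right h3 (norm_nonneg _)
    nlinarith [h1, h2, h4]
  have h2 : ∫ t in (0:ℝ)..1, ψ t ≤ ∫ t in (0:ℝ)..1, (ψ 0 + L * ‖v‖ ^ 2 * t) :=
    intervalIntegral.integral_mono_on zero_le_one (hψcont.intervalIntegrable 0 1)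
      (Continuous.intervalIntegrable (by continuity : Continuous fun t : ℝ => ψ 0 + L * ‖v‖ ^ 2 * t) 0 1) hb
  have h3 : ∫ t in (0:ℝ)..1, (ψ 0 + L * ‖v‖ ^ 2 * t) = ψ 0 + L * ‖v‖ ^ 2 / 2 := by
    rw [intervalIntegral.integral_add intervalIntegrable_const
      (Continuous.intervalIntegrable (by continuity : Continuous fun t : ℝ => L * ‖v‖ ^ 2 * t) 0 1),
      intervalIntegral.integral_const_mul, integral_id, intervalIntegral.integral_const]
    simp
    ring
  have hφ0 : φ 0 = f a := by simp [hφ]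
  have hφ1 : φ 1 = f u := by simp [hφ, hv]
  have hψ0 : ψ 0 = ⟪f' a, v⟫ := by simp [hψ]
  rw [hφ0, hφ1] at hint
  rw [hint, h3, hψ0] at h2
  linarith

lemma pg_three_point (h : E → ℝ) (hconv : ConvexOn ℝ Set.univ h) (y b : E)
    (hmin : ∀ z, h b + (1/2) * ‖b - y‖ ^ 2 ≤ h z + (1/2) * ‖z - y‖ ^ 2) (z : E) :
    h b + (1/2) * ‖b - y‖ ^ 2 + (1/2) * ‖z - b‖ ^ 2 ≤ h z + (1/2) * ‖z - y‖ ^ 2 := by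
  set p := b - y with hp
  set q := z - y with hq
  have hqp : q - p = z - b := by rw [hp, hq]; abel
  set I : ℝ := ⟪q - p, p⟫ with hI
  set D : ℝ := ‖q - p‖ ^ 2 with hD
  have hDnn : 0 ≤ D := sq_nonneg _
  have hnq : ‖q‖ ^ 2 = ‖p‖ ^ 2 + 2 * I + D := by
    have he : q = p + (1:ℝ) • (q - p) := by rw [one_smul]; abel
    rw [he, pg_expand_sq p (q - p) 1]; ring
  have hzb : ‖z - b‖ ^ 2 = D := by rw [hD, hqp]
  rw [hzb, hnq]
  have key : ∀ ε : ℝ, 0 < ε → h b ≤ h z + I + ε := by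
    intro ε hε
    set θ : ℝ := min (1/2) (ε / (D + 1)) with hθ
    have hD1 : (0:ℝ) < D + 1 := by linarith
    have hθ0 : 0 < θ := lt_min (by norm_num) (div_pos hε hD1)
    have hθhalf : θ ≤ 1/2 := min_le_left _ _
    have hθε : θ * (D + 1) ≤ ε := by
      have hθr := min_le_right (1/2 : ℝ) (ε / (D + 1))
      calc θ * (D + 1) ≤ (ε / (D + 1)) * (D + 1) :=
            mul_le_mul_of_nonneg_right hθr hD1.le
        _ = ε := by field_simp
    set w : E := b + θ • (z - b) with hw
    have hwe : w = (1 - θ) • b + θ • z := by rw [hw]; module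
    have hconvw : h w ≤ (1 - θ) * h b + θ * h z := by
      rw [hwe]
      exact hconv.2 (Set.mem_univ b) (Set.mem_univ z) (by linarith) hθ0.le (by ring)
    have hwy : ‖w - y‖ ^ 2 = ‖p‖ ^ 2 + 2 * θ * I + θ ^ 2 * D := by
      have hwyeq : w - y = p + θ • (q - p) := by rw [hw, hp, hqp]; abel
      rw [hwyeq, pg_expand_sq p (q - p) θ]
    have hm := hmin w
    rw [hwy] at hm
    have h5 : θ * h b ≤ θ * (h z + I + (1/2) * θ * D) := by nlinarith [hconvw, hm]
    have h6 : h b ≤ h z + I + (1/2) * θ * D := le_of_mul_le_mul_left h5 hθ0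
    have h7 : (1/2) * θ * D ≤ ε := by nlinarith [hθε, hθ0.le, hDnn]
    linarith
  have := le_of_forall_pos_le_add key
  linarith

end Aux

set_option maxHeartbeats 2000000 in
/-- Convex case of Theorem 3.1 (proximal gradient method).
For a convex `L`-smooth loss `f`, a convex regularizer `Ψ`, step size `0 < η ≤ 1/(2L)`,
and the proximal gradient iterates `x (t+1) = prox_{ηλΨ}(x t − η ∇f (x t))`
(characterized as global minimizers of the prox subproblem), the objective gap decays
like `‖x 0 − x*‖² / (2ηT)`. -/
theorem prox_grad_convex_rate
    {E : Type*} [NormedAddCommGroup E] [InnerProductSpace ℝ E] [FiniteDimensional ℝ E]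
    (f : E → ℝ) (f' : E → E) (hf : ∀ x, HasGradientAt f (f' x) x)
    (hfconv : ConvexOn ℝ Set.univ f)
    (L : ℝ) (hL : 0 < L) (hlip : ∀ x y, ‖f' x - f' y‖ ≤ L * ‖x - y‖)
    (Ψ : E → ℝ) (hΨconv : ConvexOn ℝ Set.univ Ψ)
    (lam : ℝ) (hlam : 0 ≤ lam)
    (xstar : E) (hxstar : ∀ y, f xstar + lam * Ψ xstar ≤ f y + lam * Ψ y)
    (η : ℝ) (hη0 : 0 < η) (hη : η ≤ 1 / (2 * L))
    (x : ℕ → E)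
    (hprox : ∀ t : ℕ, ∀ z : E,
      η * lam * Ψ (x (t + 1)) + (1 / 2) * ‖x (t + 1) - (x t - η • f' (x t))‖ ^ 2 ≤
        η * lam * Ψ z + (1 / 2) * ‖z - (x t - η • f' (x t))‖ ^ 2) :
    ∀ T : ℕ, 1 ≤ T →
      (f (x T) + lam * Ψ (x T)) - (f xstar + lam * Ψ xstar) ≤
        ‖x 0 - xstar‖ ^ 2 / (2 * η * T) := by
  set F : E → ℝ := fun v => f v + lam * Ψ v with hFdef
  clear_value F
  have hetalam : 0 ≤ η * lam := by positivity
  have hηL : η * (2 * L) ≤ 1 := (le_div_iff₀ (by positivity : (0:ℝ) < 2 * L)).mp hη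
  -- the key one-step inequality
  have key : ∀ (t : ℕ) (u : E),
      F (x (t+1)) + (1/(2*η)) * ‖u - x (t+1)‖ ^ 2 ≤ F u + (1/(2*η)) * ‖u - x t‖ ^ 2 := by
    intro t u
    set a := x t with ha
    set b := x (t+1) with hb
    set g := f' a with hg
    set y := a - η • g with hy
    have hconvh : ConvexOn ℝ Set.univ (fun z => η * lam * Ψ z) := by
      have := hΨconv.smul hetalam
      simpa [smul_eq_mul] using this
    have h3 := pg_three_point (fun z => η * lam * Ψ z) hconvh y b (fun z => hprox t z) u
    have euy : ‖u - y‖ ^ 2 = ‖u - a‖ ^ 2 + 2 * η * ⟪g, u - a⟫ + η ^ 2 * ‖g‖ ^ 2 := by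
      have he : u - y = (u - a) + η • g := by rw [hy]; abel
      rw [he, pg_expand_sq]
    have eby : ‖b - y‖ ^ 2 = ‖b - a‖ ^ 2 + 2 * η * ⟪g, b - a⟫ + η ^ 2 * ‖g‖ ^ 2 := by
      have he : b - y = (b - a) + η • g := by rw [hy]; abel
      rw [he, pg_expand_sq]
    have hK' : η * ⟪g, u - a⟫ = η * ⟪g, u - b⟫ + η * ⟪g, b - a⟫ := by
      have : (⟪g, u - a⟫ : ℝ) = ⟪g, u - b⟫ + ⟪g, b - a⟫ := by
        rw [← inner_add_right]
        congr 1
        abel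
      rw [this]; ring
    rw [euy, eby] at h3
    have hdesc := pg_descent f f' hf L hL hlip a b
    have hconvf := pg_grad_ineq f f' hf hfconv a u
    have goal' : η * F b + (1/2) * ‖u - b‖ ^ 2 ≤ η * F u + (1/2) * ‖u - a‖ ^ 2 := by
      have hB2 : η * f b ≤ η * (f a + ⟪g, b - a⟫ + L / 2 * ‖b - a‖ ^ 2) :=
        mul_le_mul_of_nonneg_left hdesc hη0.le
      have hB3 : η * (f a + ⟪g, u - a⟫) ≤ η * f u :=
        mul_le_mul_of_nonneg_left hconvf hη0.le
      have hC : η * L * ‖b - a‖ ^ 2 ≤ (1/2) * ‖b - a‖ ^ 2 := by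
        nlinarith [mul_nonneg (by linarith : (0:ℝ) ≤ 1 - η * (2 * L)) (sq_nonneg ‖b - a‖)]
      simp only [hFdef]
      nlinarith [h3, hB2, hB3, hC, hK']
    have hmul := mul_le_mul_of_nonneg_left goal' (by positivity : (0:ℝ) ≤ 1/η)
    have e : ∀ c X : ℝ, (1/η) * (η * c + (1/2) * X) = c + (1/(2*η)) * X := by
      intro c X
      field_simp
    rw [e, e] at hmul
    exact hmul
  -- monotonicity of F along iterates
  have mono : ∀ t : ℕ, F (x (t+1)) ≤ F (x t) := by
    intro t
    have hk := key t (x t)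
    have h0 : ‖x t - x t‖ ^ 2 = 0 := by simp
    have h1 : 0 ≤ (1/(2*η)) * ‖x t - x (t+1)‖ ^ 2 := by positivity
    rw [h0, mul_zero] at hk
    linarith
  have monoLe : ∀ s t : ℕ, s ≤ t → F (x t) ≤ F (x s) := by
    intro s t hst
    induction t, hst using Nat.le_induction with
    | base => exact le_refl _
    | succ n hn ih => exact (mono n).trans ih
  -- telescoping sum
  have tele : ∀ T : ℕ,
      (∑ t ∈ Finset.range T, (F (x (t+1)) - F xstar)) + (1/(2*η)) * ‖xstar - x T‖ ^ 2 ≤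
        (1/(2*η)) * ‖xstar - x 0‖ ^ 2 := by
    intro T
    induction T with
    | zero => simp
    | succ n ih =>
      rw [Finset.sum_range_succ]
      have hk := key n xstar
      linarith
  intro T hT
  have hTpos : (0:ℝ) < T := by exact_mod_cast Nat.lt_of_lt_of_le Nat.zero_lt_one hT
  have hlb : (T:ℝ) * (F (x T) - F xstar) ≤ ∑ t ∈ Finset.range T, (F (x (t+1)) - F xstar) := by
    have hterm : ∀ t ∈ Finset.range T, F (x T) - F xstar ≤ F (x (t+1)) - F xstar := by
      intro t ht
      have := monoLe (t+1) T (Nat.succ_le_of_lt (Finset.mem_range.mp ht))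
      linarith
    calc (T:ℝ) * (F (x T) - F xstar)
        = ∑ _t ∈ Finset.range T, (F (x T) - F xstar) := by
          rw [Finset.sum_const, Finset.card_range, nsmul_eq_mul]
      _ ≤ _ := Finset.sum_le_sum hterm
  have hnn : 0 ≤ (1/(2*η)) * ‖xstar - x T‖ ^ 2 := by positivity
  have hfin : (T:ℝ) * (F (x T) - F xstar) ≤ (1/(2*η)) * ‖x 0 - xstar‖ ^ 2 := by
    have ht := tele T
    rw [norm_sub_rev xstar (x 0)] at ht
    linarith
  have h2η : (0:ℝ) < 2 * η * T := by positivity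
  have hfinal : F (x T) - F xstar ≤ ‖x 0 - xstar‖ ^ 2 / (2 * η * (T:ℝ)) := by
    rw [le_div_iff₀ h2η]
    have hm := mul_le_mul_of_nonneg_left hfin (by positivity : (0:ℝ) ≤ 2*η)
    have he2 : (2*η) * ((1/(2*η)) * ‖x 0 - xstar‖ ^ 2) = ‖x 0 - xstar‖ ^ 2 := by
      field_simp
    calc (F (x T) - F xstar) * (2 * η * T) = (2*η) * ((T:ℝ) * (F (x T) - F xstar)) := by ring
      _ ≤ (2*η) * ((1/(2*η)) * ‖x 0 - xstar‖ ^ 2) := hm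
      _ = ‖x 0 - xstar‖ ^ 2 := he2
  simp only [hFdef] at hfinal
  exact hfinal
end

section
/- Let E be a finite-dimensional real inner product space. Let f : E → ℝ be differentiable with gradient ∇f that is Lipschitz with constant L > 0, let Ψ : E → ℝ be any function, let λ ≥ 0, and fix η with 0 < η ≤ 1/(2L). Suppose x ∈ E and x⁺ is a global minimizer of z ↦ ηλΨ(z) + (1/2)‖z − (x − η∇f(x))‖². Then f(x⁺) + λΨ(x⁺) ≤ f(x) + λΨ(x) − (1/(4η))‖x⁺ − x‖². -/
open InnerProductSpace

/-- Descent lemma: if the gradient is `L`-Lipschitz, then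
`f (x + d) ≤ f x + ⟪f' x, d⟫ + L/2 * ‖d‖²`. -/
lemma descent_lemma {E : Type*} [NormedAddCommGroup E] [InnerProductSpace ℝ E] [CompleteSpace E]
    (f : E → ℝ) (f' : E → E) (hf : ∀ x, HasGradientAt f (f' x) x)
    (L : ℝ) (hL : 0 ≤ L) (hlip : ∀ x y, ‖f' x - f' y‖ ≤ L * ‖x - y‖)
    (x d : E) :
    f (x + d) ≤ f x + ⟪f' x, d⟫_ℝ + L / 2 * ‖d‖ ^ 2 := by
  set g : ℝ → ℝ := fun t => f (x + t • d) with hg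
  have hgd : ∀ t : ℝ, HasDerivAt g ⟪f' (x + t • d), d⟫_ℝ t := by
    intro t
    have hc : HasDerivAt (fun t : ℝ => x + t • d) d t := by
      simpa using ((hasDerivAt_id t).smul_const d).const_add x
    have := ((hasGradientAt_iff_hasFDerivAt.1 (hf (x + t • d))).comp_hasDerivAt t hc)
    exact this
  set h : ℝ → ℝ := fun t => L / 2 * t ^ 2 * ‖d‖ ^ 2 + t * ⟪f' x, d⟫_ℝ - g t with hh
  have hhd : ∀ t : ℝ, HasDerivAt h
      (L * t * ‖d‖ ^ 2 + ⟪f' x, d⟫_ℝ - ⟪f' (x + t • d), d⟫_ℝ) t := by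
    intro t
    have h1 : HasDerivAt (fun t : ℝ => L / 2 * t ^ 2 * ‖d‖ ^ 2) (L * t * ‖d‖ ^ 2) t := by
      have := ((hasDerivAt_pow 2 t).const_mul (L / 2)).mul_const (‖d‖ ^ 2)
      refine this.congr_deriv ?_
      rw [show (2:ℕ) - 1 = 1 from rfl, pow_one]; push_cast; ring
    have h2 : HasDerivAt (fun t : ℝ => t * ⟪f' x, d⟫_ℝ) ⟪f' x, d⟫_ℝ t := by
      simpa using (hasDerivAt_id t).mul_const ⟪f' x, d⟫_ℝ
    exact (h1.add h2).sub (hgd t)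
  have hmono : MonotoneOn h (Set.Icc (0:ℝ) 1) := by
    apply monotoneOn_of_deriv_nonneg (convex_Icc 0 1)
    · exact fun t _ => ((hhd t).continuousAt).continuousWithinAt
    · intro t ht
      exact ((hhd t).differentiableAt).differentiableWithinAt
    · intro t ht
      rw [interior_Icc] at ht
      rw [(hhd t).deriv]
      have h3 : ⟪f' x - f' (x + t • d), d⟫_ℝ ≥ -(L * t * ‖d‖ ^ 2) := by
        have := abs_real_inner_le_norm (f' x - f' (x + t • d)) d
        have h4 : ‖f' x - f' (x + t • d)‖ ≤ L * (t * ‖d‖) := by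
          have := hlip x (x + t • d)
          simpa [norm_smul, abs_of_nonneg ht.1.le, mul_assoc] using this
        nlinarith [neg_abs_le (⟪f' x - f' (x + t • d), d⟫_ℝ), norm_nonneg d,
          mul_le_mul_of_nonneg_right h4 (norm_nonneg d)]
      rw [inner_sub_left] at h3
      linarith
  have h01 : h 0 ≤ h 1 := hmono (by norm_num) (by norm_num) (by norm_num)
  simp only [hh, hg] at h01
  simp only [one_smul, zero_smul, add_zero] at h01
  norm_num at h01
  linarith

/-- Sufficient-decrease inequality for one proximal gradient step
(proof of Theorem 3.1, general case). No convexity of `f` or `Ψ` is required. -/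
theorem prox_grad_sufficient_decrease
    {E : Type*} [NormedAddCommGroup E] [InnerProductSpace ℝ E] [FiniteDimensional ℝ E]
    (f : E → ℝ) (f' : E → E) (hf : ∀ x, HasGradientAt f (f' x) x)
    (L : ℝ) (hL : 0 < L) (hlip : ∀ x y, ‖f' x - f' y‖ ≤ L * ‖x - y‖)
    (Ψ : E → ℝ) (lam : ℝ) (hlam : 0 ≤ lam)
    (η : ℝ) (hη0 : 0 < η) (hη : η ≤ 1 / (2 * L))
    (x xplus : E)
    (hprox : ∀ z : E,
      η * lam * Ψ xplus + (1 / 2) * ‖xplus - (x - η • f' x)‖ ^ 2 ≤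
        η * lam * Ψ z + (1 / 2) * ‖z - (x - η • f' x)‖ ^ 2) :
    f xplus + lam * Ψ xplus ≤ f x + lam * Ψ x - (1 / (4 * η)) * ‖xplus - x‖ ^ 2 := by
  set d := xplus - x with hd
  set p := f' x with hp
  -- prox inequality with z = x
  have key := hprox x
  have hx1 : xplus - (x - η • p) = d + η • p := by simp [hd]; abel
  have hx2 : x - (x - η • p) = η • p := by abel
  rw [hx1, hx2] at key
  have hexp : ‖d + η • p‖ ^ 2 = ‖d‖ ^ 2 + 2 * (η * ⟪d, p⟫_ℝ) + η ^ 2 * ‖p‖ ^ 2 := by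
    rw [norm_add_sq_real, real_inner_smul_right, norm_smul]
    rw [Real.norm_eq_abs, abs_of_pos hη0]
    ring
  have hps : ‖η • p‖ ^ 2 = η ^ 2 * ‖p‖ ^ 2 := by
    rw [norm_smul, Real.norm_eq_abs, abs_of_pos hη0]; ring
  rw [hexp, hps] at key
  have hη' : 2 * η * L ≤ 1 := by
    rw [le_div_iff₀ (by positivity)] at hη; linarith
  have key2 : lam * Ψ xplus + ⟪d, p⟫_ℝ + (1 / (2 * η)) * ‖d‖ ^ 2 ≤ lam * Ψ x := by
    have hmul : η * (lam * Ψ xplus + ⟪d, p⟫_ℝ + (1 / (2 * η)) * ‖d‖ ^ 2) ≤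
        η * (lam * Ψ x) := by
      have e : η * ((1 / (2 * η)) * ‖d‖ ^ 2) = ‖d‖ ^ 2 / 2 := by
        field_simp
      nlinarith [key]
    exact le_of_mul_le_mul_left hmul hη0
  have hdes := descent_lemma f f' hf L hL.le hlip x d
  rw [show x + d = xplus by simp [hd]] at hdes
  rw [real_inner_comm d (f' x)] at hdes
  have hL4 : L / 2 ≤ 1 / (4 * η) := by
    rw [le_div_iff₀ (by positivity)]; nlinarith
  have h24 : 1 / (2 * η) = 2 * (1 / (4 * η)) := by
    field_simp; ring
  have hnd : (0:ℝ) ≤ ‖d‖ ^ 2 := by positivity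
  nlinarith [mul_le_mul_of_nonneg_right
    (show L / 2 - 1 / (2 * η) ≤ -(1 / (4 * η)) by linarith) hnd]
end

section
/- Let m ≥ 1, let 0 = q_0 < q_1 < ⋯ < q_m and 0 ≤ a_0 < a_1 < ⋯ < a_m be real numbers, set b_0 = 0 and b_k = b_{k−1} + a_{k−1}(q_k − q_{k−1}) for k = 1,…,m, and define the convex PAR Ψ : ℝ → ℝ by Ψ(z) = a_k(|z| − q_k) + b_k whenever q_k ≤ |z| ≤ q_{k+1} (for k = 0,…,m−1) and Ψ(z) = a_m(|z| − q_m) + b_m for |z| ≥ q_m. Fix λ > 0 and x ∈ ℝ, and let Φ(z) = λΨ(z) + (1/2)(z − x)². Then: (i) if |x| ≤ λa_0, then z = 0 is the unique global minimizer of Φ; (ii) for each k ∈ {1,…,m}, if q_k + λa_{k−1} ≤ |x| ≤ q_k + λa_k, then z = sign(x)·q_k is the unique global minimizer of Φ; (iii) for each k ∈ {0,…,m−1}, if q_k + λa_k ≤ |x| ≤ q_{k+1} + λa_k, then z = x − sign(x)·λa_k is the unique global minimizer of Φ; and if |x| ≥ q_m + λa_m, then z = x − sign(x)·λa_m is the unique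 global minimizer of Φ. -/
/-- Closed-form proximal mapping of the convex piecewise-affine
regularizer (Section 3.1). The regularizer `Ψ` is specified piecewise through its
values on each segment `q k ≤ |z| ≤ q (k+1)` (and beyond `q m`), with `q 0 = 0`,
strictly increasing breakpoints `q`, nonnegative strictly increasing slopes `a`,
and intercepts `b` defined recursively. For each regime of `|x|`, the indicated
point is the unique global minimizer of `Φ(z) = λΨ(z) + (1/2)(z − x)²`. -/
theorem prox_convex_par
    (m : ℕ) (hm : 1 ≤ m)
    (q a b : ℕ → ℝ)
    (hq0 : q 0 = 0) (hqmono : ∀ k < m, q k < q (k + 1))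
    (ha0 : 0 ≤ a 0) (hamono : ∀ k < m, a k < a (k + 1))
    (hb0 : b 0 = 0) (hbrec : ∀ k < m, b (k + 1) = b k + a k * (q (k + 1) - q k))
    (Ψ : ℝ → ℝ)
    (hΨ : ∀ z : ℝ, ∀ k < m, q k ≤ |z| → |z| ≤ q (k + 1) →
      Ψ z = a k * (|z| - q k) + b k)
    (hΨtop : ∀ z : ℝ, q m ≤ |z| → Ψ z = a m * (|z| - q m) + b m)
    (lam : ℝ) (hlam : 0 < lam) (x : ℝ)
    (Φ : ℝ → ℝ) (hΦ : ∀ z, Φ z = lam * Ψ z + (1 / 2) * (z - x) ^ 2) :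
    -- (i) small inputs are mapped to 0
    (|x| ≤ lam * a 0 → ∀ z : ℝ, z ≠ 0 → Φ 0 < Φ z) ∧
    -- (ii) inputs in [q k + λ a (k-1), q k + λ a k] are mapped to sign(x)·q k
    (∀ k < m, q (k + 1) + lam * a k ≤ |x| → |x| ≤ q (k + 1) + lam * a (k + 1) →
      ∀ z : ℝ, z ≠ Real.sign x * q (k + 1) → Φ (Real.sign x * q (k + 1)) < Φ z) ∧
    -- (iii) inputs in [q k + λ a k, q (k+1) + λ a k] are mapped to x − sign(x)·λ a k
    (∀ k < m, q k + lam * a k ≤ |x| → |x| ≤ q (k + 1) + lam * a k →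
      ∀ z : ℝ, z ≠ x - Real.sign x * (lam * a k) →
        Φ (x - Real.sign x * (lam * a k)) < Φ z) ∧
    -- (iii') inputs beyond q m + λ a m are mapped to x − sign(x)·λ a m
    (q m + lam * a m ≤ |x| →
      ∀ z : ℝ, z ≠ x - Real.sign x * (lam * a m) →
        Φ (x - Real.sign x * (lam * a m)) < Φ z) := by
  -- basic monotonicity facts
  have qle : ∀ i j : ℕ, i ≤ j → j ≤ m → q i ≤ q j := by
    intro i j hij hjm
    induction j, hij using Nat.le_induction with
    | base => exact le_rfl
    | succ j hij ih =>
      have hj : j < m := hjm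
      exact (ih hj.le).trans (hqmono j hj).le
  have ale : ∀ i j : ℕ, i ≤ j → j ≤ m → a i ≤ a j := by
    intro i j hij hjm
    induction j, hij using Nat.le_induction with
    | base => exact le_rfl
    | succ j hij ih =>
      have hj : j < m := hjm
      exact (ih hj.le).trans (hamono j hj).le
  have qnn : ∀ k : ℕ, k ≤ m → 0 ≤ q k := fun k hk => hq0 ▸ qle 0 k (Nat.zero_le k) hk
  have ann : ∀ k : ℕ, k ≤ m → 0 ≤ a k := fun k hk => ha0.trans (ale 0 k (Nat.zero_le k) hk)
  -- affine pieces comparison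
  have up : ∀ t : ℝ, ∀ j k : ℕ, j ≤ k → k ≤ m → q k ≤ t →
      a j * (t - q j) + b j ≤ a k * (t - q k) + b k := by
    intro t j k hjk hkm hqt
    induction k, hjk using Nat.le_induction with
    | base => exact le_rfl
    | succ k hjk ih =>
      have hk : k < m := hkm
      have h1 : q k ≤ t := (qle k (k+1) (Nat.le_succ k) hkm).trans hqt
      have h2 := ih hk.le h1
      have h3 := hbrec k hk
      have h4 := (hamono k hk).le
      nlinarith [mul_nonneg (sub_nonneg.2 h4) (sub_nonneg.2 hqt)]
  have down : ∀ t : ℝ, ∀ k j : ℕ, k ≤ j → j ≤ m → t ≤ q (k+1) →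
      a j * (t - q j) + b j ≤ a k * (t - q k) + b k := by
    intro t k j hkj hjm hqt
    induction j, hkj using Nat.le_induction with
    | base => exact le_rfl
    | succ j hkj ih =>
      have hj : j < m := hjm
      have h2 := ih hj.le
      have h3 := hbrec j hj
      have h4 := (hamono j hj).le
      have h5 : t ≤ q (j+1) := hqt.trans (qle (k+1) (j+1) (Nat.succ_le_succ hkj) hjm)
      nlinarith [mul_nonneg (sub_nonneg.2 h4) (sub_nonneg.2 h5)]
  -- segment location
  have seg : ∀ t : ℝ, 0 ≤ t → t ≤ q m → ∃ k, k < m ∧ q k ≤ t ∧ t ≤ q (k+1) := by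
    have main : ∀ n : ℕ, n ≤ m → ∀ t : ℝ, 0 ≤ t → t ≤ q n →
        ∃ k, k < m ∧ q k ≤ t ∧ t ≤ q (k+1) := by
      intro n
      induction n with
      | zero =>
        intro _ t ht0 htq
        refine ⟨0, hm, ?_, ?_⟩
        · rw [hq0]; exact ht0
        · rw [hq0] at htq
          have := hqmono 0 hm
          rw [hq0] at this
          linarith
      | succ n ih =>
        intro hn t ht0 htq
        by_cases h : q n ≤ t
        · exact ⟨n, hn, h, htq⟩
        · exact ih (Nat.le_of_succ_le hn) t ht0 (le_of_not_ge h)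
    exact fun t ht0 htq => main m le_rfl t ht0 htq
  -- global lower bound by each affine piece
  have lower : ∀ z : ℝ, ∀ j : ℕ, j ≤ m → a j * (|z| - q j) + b j ≤ Ψ z := by
    intro z j hj
    by_cases h : q m ≤ |z|
    · rw [hΨtop z h]
      exact up |z| j m hj le_rfl h
    · obtain ⟨k, hk, h1, h2⟩ := seg |z| (abs_nonneg z) (le_of_not_ge h)
      rw [hΨ z k hk h1 h2]
      rcases le_total j k with hjk | hkj
      · exact up |z| j k hjk hk.le h1
      · exact down |z| k j hkj (by omega) h2
  -- Ψ depends only on |z|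
  have radial : ∀ z w : ℝ, |z| = |w| → Ψ z = Ψ w := by
    intro z w h
    by_cases hq : q m ≤ |z|
    · rw [hΨtop z hq, hΨtop w (h ▸ hq), h]
    · obtain ⟨k, hk, h1, h2⟩ := seg |z| (abs_nonneg z) (le_of_not_ge hq)
      rw [hΨ z k hk h1 h2, hΨ w k hk (h ▸ h1) (h ▸ h2), h]
  -- master lemma
  have master : ∀ zs : ℝ, zs * x = |zs| * |x| → (zs = 0 ∨ 0 < zs * x) →
      (∀ z' : ℝ, |z'| ≠ |zs| →
        lam * Ψ zs + (1/2) * (|zs| - |x|)^2 < lam * Ψ z' + (1/2) * (|z'| - |x|)^2) →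
      ∀ z : ℝ, z ≠ zs → Φ zs < Φ z := by
    intro zs halign hpos H z hz
    rw [hΦ, hΦ]
    have hzs_sq : (zs - x)^2 = (|zs| - |x|)^2 := by
      linarith [sq_abs zs, sq_abs x, halign]
    by_cases hzz : |z| = |zs|
    · have hz' : z = -zs := by
        rcases abs_eq_abs.1 hzz with h | h
        · exact absurd h hz
        · exact h
      have hzs0 : zs ≠ 0 := by
        intro h; apply hz; simp [hz', h]
      have hp : 0 < zs * x := hpos.resolve_left hzs0
      have hpsi : Ψ z = Ψ zs := radial z zs hzz
      rw [hpsi, hz']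
      linarith [hp]
    · have h1 := H z hzz
      have h2 : (|z| - |x|)^2 ≤ (z - x)^2 := by
        linarith [sq_abs z, sq_abs x, le_abs_self (z * x), abs_mul z x]
      linarith [hzs_sq ▸ h1]
  -- shared part of cases (iii) and (iii')
  have absZs : ∀ k : ℕ, k ≤ m → q k + lam * a k ≤ |x| →
      |x - Real.sign x * (lam * a k)| = |x| - lam * a k ∧
      (x - Real.sign x * (lam * a k)) * x = (|x| - lam * a k) * |x| := by
    intro k hkm hx1
    have hts0 : 0 ≤ |x| - lam * a k := by have := qnn k hkm; linarith
    have hla : 0 ≤ lam * a k := mul_nonneg hlam.le (ann k hkm)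
    rcases lt_trichotomy x 0 with h | h | h
    · rw [Real.sign_of_neg h]
      rw [abs_of_neg h] at hts0 ⊢
      constructor
      · rw [abs_of_nonpos (by linarith)]; ring
      · ring
    · subst h
      simp only [Real.sign_zero, zero_mul, sub_zero, abs_zero, zero_sub, mul_zero]
      have : lam * a k = 0 := le_antisymm (by simpa using hts0) hla
      rw [this]; norm_num
    · rw [Real.sign_of_pos h]
      rw [abs_of_pos h] at hts0 ⊢
      constructor
      · rw [abs_of_nonneg (by linarith)]; ring
      · ring
  have caseGen : ∀ k : ℕ, k ≤ m → q k + lam * a k ≤ |x| →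
      Ψ (x - Real.sign x * (lam * a k)) = a k * ((|x| - lam * a k) - q k) + b k →
      ∀ z : ℝ, z ≠ x - Real.sign x * (lam * a k) →
        Φ (x - Real.sign x * (lam * a k)) < Φ z := by
    intro k hkm hx1 hΨeval z hz
    obtain ⟨habs, halign⟩ := absZs k hkm hx1
    set zs := x - Real.sign x * (lam * a k) with hzsdef
    have hla : 0 ≤ lam * a k := mul_nonneg hlam.le (ann k hkm)
    refine master zs (by rw [habs]; exact halign) ?_ ?_ z hz
    · by_cases hzs : zs = 0
      · exact Or.inl hzs
      · right
        have h1 : 0 < |zs| := abs_pos.2 hzs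
        rw [habs] at h1
        have h2 : 0 < |x| := by linarith
        rw [halign]
        exact mul_pos h1 h2
    · intro z' hne
      rw [hΨeval, habs]
      rw [habs] at hne
      have hL := lower z' k hkm
      have hsq : 0 < (|z'| - (|x| - lam * a k))^2 := by
        have := sub_ne_zero.2 hne
        positivity
      have hL2 := mul_le_mul_of_nonneg_left hL hlam.le
      have key : lam * (a k * ((|x| - lam * a k) - q k) + b k) + (1/2) * ((|x| - lam * a k) - |x|)^2
          < lam * (a k * (|z'| - q k) + b k) + (1/2) * (|z'| - |x|)^2 := by
        linarith [hsq]
      linarith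
  refine ⟨?_, ?_, ?_, ?_⟩
  -- case (i)
  · intro hx z hz
    have hΨ0 : Ψ 0 = 0 := by
      have hq1 : (0:ℝ) ≤ q 1 := qnn 1 hm
      rw [hΨ 0 0 hm (by simp [hq0]) (by simpa using hq1), hq0, hb0]
      simp
    refine master 0 (by simp) (Or.inl rfl) ?_ z hz
    intro z' hne
    rw [hΨ0, abs_zero]
    have hL := lower z' 0 (Nat.zero_le m)
    rw [hq0, hb0] at hL
    have ht : 0 < |z'| := by
      rcases (abs_nonneg z').lt_or_eq with h | h
      · exact h
      · exact absurd (by simpa using h.symm) hne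
    have hL2 := mul_le_mul_of_nonneg_left hL hlam.le
    linarith [mul_pos ht ht, mul_nonneg ht.le (sub_nonneg.2 hx), hL2]
  -- case (ii)
  · intro k hk hx1 hx2 z hz
    have hq1pos : 0 < q (k+1) := by
      have h1 := qle 0 k (Nat.zero_le k) hk.le
      rw [hq0] at h1
      linarith [hqmono k hk]
    have hak : 0 ≤ a k := ann k hk.le
    have hxpos : 0 < |x| := by nlinarith [mul_nonneg hlam.le hak]
    have hxne : x ≠ 0 := abs_ne_zero.1 hxpos.ne'
    have hsx : Real.sign x * x = |x| := by
      rcases hxne.lt_or_gt with h | h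
      · rw [Real.sign_of_neg h, abs_of_neg h]; ring
      · rw [Real.sign_of_pos h, abs_of_pos h]; ring
    have hsabs : |Real.sign x| = 1 := by
      rcases hxne.lt_or_gt with h | h
      · rw [Real.sign_of_neg h]; norm_num
      · rw [Real.sign_of_pos h]; norm_num
    set zs := Real.sign x * q (k+1) with hzsdef
    have habs : |zs| = q (k+1) := by
      rw [hzsdef, abs_mul, hsabs, one_mul, abs_of_pos hq1pos]
    have hΨzs : Ψ zs = b (k+1) := by
      rw [hΨ zs k hk (by rw [habs]; exact (hqmono k hk).le) habs.le, habs, hbrec k hk]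
      ring
    refine master zs ?_ ?_ ?_ z hz
    · rw [habs]
      rw [hzsdef]
      rw [mul_comm (Real.sign x) (q (k+1)), mul_assoc, hsx]
    · right
      rw [hzsdef, mul_comm (Real.sign x) (q (k+1)), mul_assoc, hsx]
      exact mul_pos hq1pos hxpos
    · intro z' hne
      rw [hΨzs, habs]
      rw [habs] at hne
      rcases hne.lt_or_gt with hlt | hgt
      · have hL := lower z' k hk.le
        have hb := hbrec k hk
        have hprod : 0 < (q (k+1) - |z'|) * (|x| - lam * a k - (|z'| + q (k+1))/2) :=
          mul_pos (by linarith) (by linarith)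
        have hL2 := mul_le_mul_of_nonneg_left hL hlam.le
        have key : lam * (b k + a k * (q (k+1) - q k)) + (1/2) * (q (k+1) - |x|)^2
            < lam * (a k * (|z'| - q k) + b k) + (1/2) * (|z'| - |x|)^2 := by
          linarith [hprod]
        rw [hb]
        linarith
      · have hL := lower z' (k+1) hk
        have hprod : 0 < (|z'| - q (k+1)) * (lam * a (k+1) + (|z'| + q (k+1))/2 - |x|) :=
          mul_pos (by linarith) (by linarith)
        have hL2 := mul_le_mul_of_nonneg_left hL hlam.le
        have key : lam * b (k+1) + (1/2) * (q (k+1) - |x|)^2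
            < lam * (a (k+1) * (|z'| - q (k+1)) + b (k+1)) + (1/2) * (|z'| - |x|)^2 := by
          linarith [hprod]
        linarith
  -- case (iii)
  · intro k hk hx1 hx2 z hz
    obtain ⟨habs, _⟩ := absZs k hk.le hx1
    refine caseGen k hk.le hx1 ?_ z hz
    rw [hΨ _ k hk (by rw [habs]; linarith) (by rw [habs]; linarith), habs]
  -- case (iii')
  · intro hx1 z hz
    obtain ⟨habs, _⟩ := absZs m le_rfl hx1
    refine caseGen m le_rfl hx1 ?_ z hz
    rw [hΨtop _ (by rw [habs]; linarith), habs]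
end

section
/- Let q > 0 and define the quasiconvex PAR Ψ : ℝ → ℝ as follows: for x ∈ ℝ, letting k = ⌊|x|/q⌋ ∈ ℕ, set Ψ(x) = |x| − kq/2 if kq ≤ |x| ≤ (2k+1)q/2, and Ψ(x) = (k+1)q/2 if (2k+1)q/2 ≤ |x| ≤ (k+1)q. Fix λ with 0 < λ ≤ q, fix x ∈ ℝ, and let Φ(z) = λΨ(z) + (1/2)(z − x)². Then for every k ∈ ℕ: (i) if kq ≤ |x| ≤ kq + λ, then z = sign(x)·kq is a global minimizer of Φ over ℝ; (ii) if kq + λ ≤ |x| ≤ (2k+1)q/2 + λ/2, then z = sign(x)·(|x| − λ) is a global minimizer of Φ over ℝ; (iii) if (2k+1)q/2 + λ/2 ≤ |x| ≤ (k+1)q, then z = x is a global minimizer of Φ over ℝ. -/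
/-- The quasiconvex piecewise-affine regularizer with uniformly spaced quantization
values `Q = {0, ±q, ±2q, …}`: with `k = ⌊|x|/q⌋`, it equals `|x| − kq/2` on
`[kq, (2k+1)q/2]` and `(k+1)q/2` on `[(2k+1)q/2, (k+1)q]`. -/
noncomputable def quasiconvexPAR (q : ℝ) (x : ℝ) : ℝ :=
  if |x| ≤ (2 * (⌊|x| / q⌋₊ : ℝ) + 1) * q / 2 then
    |x| - (⌊|x| / q⌋₊ : ℝ) * q / 2
  else
    ((⌊|x| / q⌋₊ : ℝ) + 1) * q / 2

lemma floor_eq_of_bounds (q : ℝ) (hq : 0 < q) (k : ℕ) (t : ℝ)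
    (h1 : (k : ℝ) * q ≤ t) (h2 : t < ((k : ℝ) + 1) * q) : ⌊t / q⌋₊ = k := by
  have ht : 0 ≤ t / q := div_nonneg (le_trans (by positivity) h1) hq.le
  rw [Nat.floor_eq_iff ht]
  refine ⟨by rw [le_div_iff₀ hq]; exact h1, by rw [div_lt_iff₀ hq]; linarith⟩

lemma floor_le_mul (q : ℝ) (hq : 0 < q) (t : ℝ) (ht : 0 ≤ t) :
    (⌊t / q⌋₊ : ℝ) * q ≤ t := by
  have := Nat.floor_le (div_nonneg ht hq.le)
  calc (⌊t / q⌋₊ : ℝ) * q ≤ (t / q) * q := by nlinarith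
    _ = t := by field_simp

lemma lt_floor_succ_mul (q : ℝ) (hq : 0 < q) (t : ℝ) :
    t < ((⌊t / q⌋₊ : ℝ) + 1) * q := by
  have := Nat.lt_floor_add_one (t / q)
  calc t = (t / q) * q := by field_simp
    _ < ((⌊t / q⌋₊ : ℝ) + 1) * q := by nlinarith

lemma psi_formula (q : ℝ) (hq : 0 < q) (t : ℝ) (ht : 0 ≤ t) :
    quasiconvexPAR q t = (⌊t / q⌋₊ : ℝ) * q / 2 + min (t - (⌊t / q⌋₊ : ℝ) * q) (q / 2) := by
  unfold quasiconvexPAR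
  rw [abs_of_nonneg ht]
  split_ifs with h
  · rw [min_eq_left (by linarith)]; ring
  · push_neg at h
    rw [min_eq_right (by linarith)]; ring

lemma psi_eval_mid (q : ℝ) (hq : 0 < q) (k : ℕ) (t : ℝ)
    (h1 : (k : ℝ) * q ≤ t) (h2 : t ≤ (2 * (k : ℝ) + 1) * q / 2) :
    quasiconvexPAR q t = t - (k : ℝ) * q / 2 := by
  have ht : 0 ≤ t := le_trans (by positivity) h1
  have hfl : ⌊t / q⌋₊ = k := floor_eq_of_bounds q hq k t h1 (by linarith)
  rw [psi_formula q hq t ht, hfl, min_eq_left (by linarith)]; ring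

lemma psi_eval_high (q : ℝ) (hq : 0 < q) (k : ℕ) (t : ℝ)
    (h1 : (2 * (k : ℝ) + 1) * q / 2 ≤ t) (h2 : t ≤ ((k : ℝ) + 1) * q) :
    quasiconvexPAR q t = ((k : ℝ) + 1) * q / 2 := by
  have ht : 0 ≤ t := le_trans (by positivity) h1
  rcases eq_or_lt_of_le h2 with he | hlt
  · have hfl : ⌊t / q⌋₊ = k + 1 := by
      apply floor_eq_of_bounds q hq (k + 1) t
      · push_cast; linarith
      · push_cast; linarith
    rw [psi_formula q hq t ht, hfl]
    push_cast
    rw [show t - ((k : ℝ) + 1) * q = 0 by linarith, min_eq_left (by linarith)]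
    ring
  · have hfl : ⌊t / q⌋₊ = k := floor_eq_of_bounds q hq k t (by nlinarith) hlt
    rw [psi_formula q hq t ht, hfl, min_eq_right (by linarith)]; ring

set_option maxHeartbeats 1000000 in
lemma key1 (q lam : ℝ) (hq : 0 < q) (hl0 : 0 < lam) (hl : lam ≤ q)
    (k : ℕ) (s : ℝ) (h1 : (k : ℝ) * q ≤ s) (h2 : s ≤ (k : ℝ) * q + lam)
    (t : ℝ) (ht : 0 ≤ t) :
    lam * ((k : ℝ) * q / 2) + (1 / 2) * (s - (k : ℝ) * q) ^ 2 ≤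
      lam * quasiconvexPAR q t + (1 / 2) * (t - s) ^ 2 := by
  have hmq : (⌊t / q⌋₊ : ℝ) * q ≤ t := floor_le_mul q hq t ht
  have hmq' : t < ((⌊t / q⌋₊ : ℝ) + 1) * q := lt_floor_succ_mul q hq t
  rw [psi_formula q hq t ht]
  rcases le_total (t - (⌊t / q⌋₊ : ℝ) * q) (q / 2) with h7 | h7
  on_goal 1 => rw [min_eq_left h7]
  on_goal 2 => rw [min_eq_right h7]
  all_goals {
    set m := ⌊t / q⌋₊ with hm
    set M := (m : ℝ) * q with hM
    set K := (k : ℝ) * q with hK'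
    have hK : (0:ℝ) ≤ K := by positivity
    rcases lt_trichotomy m k with hmk | hmk | hmk
    · rcases eq_or_lt_of_le (Nat.succ_le_of_lt hmk) with hek | hek
      · have hek' : k = m + 1 := hek.symm
        have hMK : M + q = K := by rw [hM, hK', hek']; push_cast; ring
        first
        | nlinarith [sq_nonneg (q - (t - M) - lam), mul_nonneg hl0.le (sub_nonneg.mpr hl),
            mul_nonneg (show (0:ℝ) ≤ q - (t - M) by linarith) (show (0:ℝ) ≤ s - K by linarith)]
        | nlinarith [mul_nonneg (show (0:ℝ) ≤ q - (t - M) by linarith)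
            (show (0:ℝ) ≤ q - (t - M) + 2*(s - K) by linarith)]
      · have hek' : ((m:ℝ) + 2) ≤ (k:ℝ) := by exact_mod_cast hek
        have hMK : M + 2*q ≤ K := by rw [hM, hK']; nlinarith
        have hD : lam ≤ K - t := by nlinarith
        nlinarith [mul_nonneg (show (0:ℝ) ≤ K - t by linarith)
            (show (0:ℝ) ≤ (K - t) - lam by linarith),
          mul_nonneg (show (0:ℝ) ≤ s - K by linarith) (show (0:ℝ) ≤ K - t by linarith),
          mul_nonneg hl0.le (show (0:ℝ) ≤ (t - M) - (t - M) by linarith),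
          mul_nonneg hl0.le (show (0:ℝ) ≤ q - (t - M) by linarith)]
    · have hMK : M = K := by rw [hM, hK', hmk]
      first
      | nlinarith [mul_nonneg (show (0:ℝ) ≤ t - M by linarith)
            (show (0:ℝ) ≤ lam - (s - K) by linarith), sq_nonneg (t - M)]
      | nlinarith [sq_nonneg (t - M - lam), mul_nonneg hl0.le (sub_nonneg.mpr hl),
          mul_nonneg (show (0:ℝ) ≤ t - M by linarith)
            (show (0:ℝ) ≤ lam - (s - K) by linarith)]
    · have hek' : ((k:ℝ) + 1) ≤ (m:ℝ) := by exact_mod_cast hmk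
      have hMK : K + q ≤ M := by rw [hM, hK']; nlinarith
      first
      | nlinarith [mul_nonneg hl0.le (show (0:ℝ) ≤ M - K - q by linarith),
          mul_nonneg (show (0:ℝ) ≤ lam - (s - K) by linarith)
            (show (0:ℝ) ≤ lam + (s - K) by linarith),
          mul_nonneg hl0.le (sub_nonneg.mpr hl), sq_nonneg (t - s),
          mul_nonneg hl0.le (show (0:ℝ) ≤ t - M by linarith)]
      | nlinarith [mul_nonneg hl0.le (show (0:ℝ) ≤ M - K - q by linarith),
          mul_nonneg (show (0:ℝ) ≤ lam - (s - K) by linarith)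
            (show (0:ℝ) ≤ lam + (s - K) by linarith),
          mul_nonneg hl0.le (sub_nonneg.mpr hl), sq_nonneg (t - s),
          mul_nonneg hl0.le hq.le]
  }

set_option maxHeartbeats 1000000 in
lemma key2 (q lam : ℝ) (hq : 0 < q) (hl0 : 0 < lam) (hl : lam ≤ q)
    (k : ℕ) (s : ℝ) (h1 : (k : ℝ) * q + lam ≤ s) (h2 : s ≤ (2 * (k : ℝ) + 1) * q / 2 + lam / 2)
    (t : ℝ) (ht : 0 ≤ t) :
    lam * (s - lam - (k : ℝ) * q / 2) + (1 / 2) * lam ^ 2 ≤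
      lam * quasiconvexPAR q t + (1 / 2) * (t - s) ^ 2 := by
  have hmq : (⌊t / q⌋₊ : ℝ) * q ≤ t := floor_le_mul q hq t ht
  have hmq' : t < ((⌊t / q⌋₊ : ℝ) + 1) * q := lt_floor_succ_mul q hq t
  rw [psi_formula q hq t ht]
  rcases le_total (t - (⌊t / q⌋₊ : ℝ) * q) (q / 2) with h7 | h7
  on_goal 1 => rw [min_eq_left h7]
  on_goal 2 => rw [min_eq_right h7]
  all_goals {
    set m := ⌊t / q⌋₊ with hm
    set M := (m : ℝ) * q with hM
    set K := (k : ℝ) * q with hK'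
    have hK : (0:ℝ) ≤ K := by positivity
    rcases lt_trichotomy m k with hmk | hmk | hmk
    · -- m < k : K - M ≥ q, use r' ≥ r/2, w = s - t ≥ both (s-K) and lam, w > s - K
      have hek' : ((m:ℝ) + 1) ≤ (k:ℝ) := by exact_mod_cast hmk
      have hMK : M + q ≤ K := by rw [hM, hK']; nlinarith
      have hr2 : (t - M) / 2 ≤ q/2 := by  -- r'/... ensure r' ≥ r/2 in both branches
        linarith
      first
      | nlinarith [sq_nonneg (s - t - lam),
          mul_nonneg hl0.le (show (0:ℝ) ≤ K - t by linarith)]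
      | nlinarith [sq_nonneg (s - t - lam),
          mul_nonneg hl0.le (show (0:ℝ) ≤ K - t by linarith),
          mul_nonneg hl0.le (show (0:ℝ) ≤ q - (t - M) by linarith)]
    · have hMK : M = K := by rw [hM, hK', hmk]
      first
      | nlinarith [sq_nonneg (t - s + lam)]
      | nlinarith [sq_nonneg (t - s), mul_nonneg hl0.le
          (show (0:ℝ) ≤ q/2 + lam/2 - (s - K) by linarith)]
    · have hek' : ((k:ℝ) + 1) ≤ (m:ℝ) := by exact_mod_cast hmk
      have hMK : K + q ≤ M := by rw [hM, hK']; nlinarith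
      first
      | nlinarith [sq_nonneg (t - s), mul_nonneg hl0.le (show (0:ℝ) ≤ M - K - q by linarith),
          mul_nonneg hl0.le (show (0:ℝ) ≤ q/2 + lam/2 - (s - K) by linarith),
          mul_nonneg hl0.le (show (0:ℝ) ≤ t - M by linarith)]
      | nlinarith [sq_nonneg (t - s), mul_nonneg hl0.le (show (0:ℝ) ≤ M - K - q by linarith),
          mul_nonneg hl0.le (show (0:ℝ) ≤ q/2 + lam/2 - (s - K) by linarith),
          mul_nonneg hl0.le hq.le]
  }

set_option maxHeartbeats 1000000 in
lemma key3 (q lam : ℝ) (hq : 0 < q) (hl0 : 0 < lam) (hl : lam ≤ q)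
    (k : ℕ) (s : ℝ) (h1 : (2 * (k : ℝ) + 1) * q / 2 + lam / 2 ≤ s) (h2 : s ≤ ((k : ℝ) + 1) * q)
    (t : ℝ) (ht : 0 ≤ t) :
    lam * (((k : ℝ) + 1) * q / 2) ≤
      lam * quasiconvexPAR q t + (1 / 2) * (t - s) ^ 2 := by
  have hmq : (⌊t / q⌋₊ : ℝ) * q ≤ t := floor_le_mul q hq t ht
  have hmq' : t < ((⌊t / q⌋₊ : ℝ) + 1) * q := lt_floor_succ_mul q hq t
  rw [psi_formula q hq t ht]
  rcases le_total (t - (⌊t / q⌋₊ : ℝ) * q) (q / 2) with h7 | h7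
  on_goal 1 => rw [min_eq_left h7]
  on_goal 2 => rw [min_eq_right h7]
  all_goals {
    set m := ⌊t / q⌋₊ with hm
    set M := (m : ℝ) * q with hM
    set K := (k : ℝ) * q with hK'
    have hK : (0:ℝ) ≤ K := by positivity
    rcases lt_trichotomy m k with hmk | hmk | hmk
    · -- m < k : w = s - t, w ≥ v = s - K > 0, hints from analysis
      have hek' : ((m:ℝ) + 1) ≤ (k:ℝ) := by exact_mod_cast hmk
      have hMK : M + q ≤ K := by rw [hM, hK']; nlinarith
      first
      | nlinarith [sq_nonneg (q - lam),
          mul_nonneg (show (0:ℝ) ≤ K - t by linarith)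
            (show (0:ℝ) ≤ (s - t) + (s - K) - lam by linarith),
          mul_nonneg (show (0:ℝ) ≤ (s - K) - (q + lam)/2 by linarith)
            (show (0:ℝ) ≤ (s - K) + (q + lam)/2 by linarith)]
      | nlinarith [sq_nonneg (q - lam),
          mul_nonneg (show (0:ℝ) ≤ K - t by linarith)
            (show (0:ℝ) ≤ (s - t) + (s - K) - lam by linarith),
          mul_nonneg (show (0:ℝ) ≤ (s - K) - (q + lam)/2 by linarith)
            (show (0:ℝ) ≤ (s - K) + (q + lam)/2 by linarith),
          mul_nonneg hl0.le (show (0:ℝ) ≤ q - (t - M) by linarith)]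
    · have hMK : M = K := by rw [hM, hK', hmk]
      first
      | nlinarith [sq_nonneg (t - s)]
      | nlinarith [sq_nonneg (q/2 - (t - M) - lam/2),
          mul_nonneg (show (0:ℝ) ≤ (s - K) - q/2 - lam/2 by linarith)
            (show (0:ℝ) ≤ (s - t) + (q/2 - (t - M)) + lam/2 by linarith)]
    · have hek' : ((k:ℝ) + 1) ≤ (m:ℝ) := by exact_mod_cast hmk
      have hMK : K + q ≤ M := by rw [hM, hK']; nlinarith
      first
      | nlinarith [sq_nonneg (t - s), mul_nonneg hl0.le (show (0:ℝ) ≤ M - K - q by linarith),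
          mul_nonneg hl0.le (show (0:ℝ) ≤ t - M by linarith)]
      | nlinarith [sq_nonneg (t - s), mul_nonneg hl0.le (show (0:ℝ) ≤ M - K - q by linarith),
          mul_nonneg hl0.le hq.le]
  }

lemma psi_abs (q z : ℝ) : quasiconvexPAR q z = quasiconvexPAR q |z| := by
  simp [quasiconvexPAR, abs_abs]

lemma sign_helper (x c : ℝ) (hc : 0 ≤ c) (h0 : x = 0 → c = 0) :
    (Real.sign x * c - x) ^ 2 = (c - |x|) ^ 2 ∧ |Real.sign x * c| = c := by
  rcases lt_trichotomy x 0 with hx | hx | hx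
  · rw [Real.sign_of_neg hx, abs_of_neg hx]
    constructor
    · ring
    · rw [show (-1 : ℝ) * c = -c by ring, abs_neg, abs_of_nonneg hc]
  · rw [hx, Real.sign_zero, h0 hx]
    norm_num
  · rw [Real.sign_of_pos hx, abs_of_pos hx, one_mul, abs_of_nonneg hc]
    exact ⟨rfl, rfl⟩

/-- Closed-form proximal mapping of the quasiconvex PAR in the regime
`0 < λ ≤ q` (Section 3.1). -/
theorem prox_quasiconvex_par_small_lambda
    (q : ℝ) (hq : 0 < q) (lam : ℝ) (hlam0 : 0 < lam) (hlam : lam ≤ q) (x : ℝ)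
    (Φ : ℝ → ℝ)
    (hΦ : ∀ z, Φ z = lam * quasiconvexPAR q z + (1 / 2) * (z - x) ^ 2) :
    ∀ k : ℕ,
      -- (i)
      (((k : ℝ) * q ≤ |x| → |x| ≤ (k : ℝ) * q + lam →
        ∀ z : ℝ, Φ (Real.sign x * ((k : ℝ) * q)) ≤ Φ z)) ∧
      -- (ii)
      (((k : ℝ) * q + lam ≤ |x| → |x| ≤ (2 * (k : ℝ) + 1) * q / 2 + lam / 2 →
        ∀ z : ℝ, Φ (Real.sign x * (|x| - lam)) ≤ Φ z)) ∧
      -- (iii)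
      (((2 * (k : ℝ) + 1) * q / 2 + lam / 2 ≤ |x| → |x| ≤ ((k : ℝ) + 1) * q →
        ∀ z : ℝ, Φ x ≤ Φ z)) := by
  have hlow : ∀ z : ℝ, lam * quasiconvexPAR q |z| + (1/2) * (|z| - |x|) ^ 2 ≤ Φ z := by
    intro z
    rw [hΦ z, psi_abs q z]
    have h1 : |(|z| - |x|)| ≤ |z - x| := abs_abs_sub_abs_le_abs_sub z x
    have h2 : (|z| - |x|) ^ 2 ≤ (z - x) ^ 2 := by
      rw [← sq_abs (z - x)]
      rcases abs_le.mp h1 with ⟨ha, hb⟩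
      exact sq_le_sq' ha hb
    nlinarith [hlam0.le]
  intro k
  refine ⟨?_, ?_, ?_⟩
  · -- case (i)
    intro h1 h2 z
    have hc : (0:ℝ) ≤ (k : ℝ) * q := by positivity
    have h0 : x = 0 → (k : ℝ) * q = 0 := by
      intro hx; rw [hx] at h1; simp at h1; linarith
    obtain ⟨e1, e2⟩ := sign_helper x ((k : ℝ) * q) hc h0
    have hpsi : quasiconvexPAR q (Real.sign x * ((k : ℝ) * q)) = (k : ℝ) * q / 2 := by
      rw [psi_abs, e2]
      have := psi_eval_mid q hq k ((k : ℝ) * q) le_rfl (by nlinarith)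
      rw [this]; ring
    have key := key1 q lam hq hlam0 hlam k |x| h1 h2 |z| (abs_nonneg z)
    calc Φ (Real.sign x * ((k : ℝ) * q))
        = lam * ((k : ℝ) * q / 2) + (1/2) * (|x| - (k : ℝ) * q) ^ 2 := by
          rw [hΦ, hpsi, e1]; ring_nf
      _ ≤ lam * quasiconvexPAR q |z| + (1/2) * (|z| - |x|) ^ 2 := by linarith
      _ ≤ Φ z := hlow z
  · -- case (ii)
    intro h1 h2 z
    have hc : (0:ℝ) ≤ |x| - lam := by
      have : (0:ℝ) ≤ (k : ℝ) * q := by positivity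
      linarith
    have h0 : x = 0 → |x| - lam = 0 := by
      intro hx; rw [hx] at h1; simp at h1
      have : (0:ℝ) ≤ (k : ℝ) * q := by positivity
      linarith
    obtain ⟨e1, e2⟩ := sign_helper x (|x| - lam) hc h0
    have hpsi : quasiconvexPAR q (Real.sign x * (|x| - lam)) = |x| - lam - (k : ℝ) * q / 2 := by
      rw [psi_abs, e2]
      exact psi_eval_mid q hq k (|x| - lam) (by linarith) (by linarith)
    have key := key2 q lam hq hlam0 hlam k |x| h1 h2 |z| (abs_nonneg z)
    calc Φ (Real.sign x * (|x| - lam))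
        = lam * (|x| - lam - (k : ℝ) * q / 2) + (1/2) * lam ^ 2 := by
          rw [hΦ, hpsi, e1]; ring_nf
      _ ≤ lam * quasiconvexPAR q |z| + (1/2) * (|z| - |x|) ^ 2 := by linarith
      _ ≤ Φ z := hlow z
  · -- case (iii)
    intro h1 h2 z
    have hpsi : quasiconvexPAR q x = ((k : ℝ) + 1) * q / 2 := by
      rw [psi_abs]
      exact psi_eval_high q hq k |x| (by linarith) h2
    have key := key3 q lam hq hlam0 hlam k |x| h1 h2 |z| (abs_nonneg z)
    calc Φ x = lam * (((k : ℝ) + 1) * q / 2) := by rw [hΦ, hpsi]; ring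
      _ ≤ lam * quasiconvexPAR q |z| + (1/2) * (|z| - |x|) ^ 2 := by linarith
      _ ≤ Φ z := hlow z
end

section
/- Let m ≥ 2 and let q_1 < q_2 < ⋯ < q_m be real numbers. Define the nonconvex PAR Ψ : [q_1, q_m] → ℝ by Ψ(z) = min_{1≤j≤m} |z − q_j| (equivalently, Ψ(z) = z − q_k for q_k ≤ z ≤ (q_k+q_{k+1})/2 and Ψ(z) = q_{k+1} − z for (q_k+q_{k+1})/2 ≤ z ≤ q_{k+1}). Fix λ > 0 and x ∈ [q_1, q_m], and let Φ(z) = λΨ(z) + (1/2)(z − x)². Then, writing clip(t, a, b) = min(max(t, a), b): (i) if q_k ≤ x ≤ (q_k+q_{k+1})/2 for some k, then z = clip(x − λ, q_k, (q_k+q_{k+1})/2) is a global minimizer of Φ over [q_1, q_m]; (ii) if (q_k+q_{k+1})/2 ≤ x ≤ q_{k+1} for some k, then z = clip(x + λ, (q_k+q_{k+1})/2, q_{k+1}) is a global minimizer of Φ over [q_1, q_m]. -/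
private lemma q_le_aux {m : ℕ} {q : ℕ → ℝ} (hq : ∀ k < m, q k < q (k + 1))
    {i j : ℕ} (hij : i ≤ j) (hj : j ≤ m) : q i ≤ q j := by
  induction j with
  | zero =>
    have : i = 0 := by omega
    simp [this]
  | succ n ih =>
    rcases Nat.lt_or_ge i (n + 1) with h | h
    · exact le_trans (ih (by omega) (by omega)) (hq n (by omega)).le
    · have : i = n + 1 := by omega
      simp [this]

private lemma prox_aux_left (lam x a b z : ℝ) (hlam : 0 < lam) (ha : a ≤ x)
    (hab : x - a ≤ |x - b|) :
    lam * (max (x - lam) a - a) + (1/2) * (max (x - lam) a - x)^2 ≤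
      lam * |z - b| + (1/2) * (z - x)^2 := by
  set d := |x - b| with hd'
  set e := |z - b| with he'
  have hd : 0 ≤ d := abs_nonneg _
  have he : 0 ≤ e := abs_nonneg _
  have hsq : (d - e)^2 ≤ (z - x)^2 := by
    have h1 : |d - e| ≤ |x - z| := by
      have h0 := abs_abs_sub_abs_le_abs_sub (x - b) (z - b)
      have h2 : (x - b) - (z - b) = x - z := by ring
      rw [h2] at h0
      exact h0
    calc (d - e)^2 = |d - e|^2 := (sq_abs _).symm
      _ ≤ |x - z|^2 := by exact pow_le_pow_left₀ (abs_nonneg _) h1 2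
      _ = (z - x)^2 := by rw [sq_abs]; ring
  rcases le_or_gt a (x - lam) with h | h
  · rw [max_eq_left h]
    nlinarith [sq_nonneg (d - e - lam)]
  · rw [max_eq_right h.le]
    nlinarith [sq_nonneg (d - e - (x - a)),
      mul_nonneg (sub_nonneg.2 h.le) he,
      mul_nonneg (sub_nonneg.2 ha) (sub_nonneg.2 hab)]

private lemma prox_aux_right (lam x a b z : ℝ) (hlam : 0 < lam) (ha : x ≤ a)
    (hab : a - x ≤ |x - b|) :
    lam * (a - min (x + lam) a) + (1/2) * (min (x + lam) a - x)^2 ≤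
      lam * |z - b| + (1/2) * (z - x)^2 := by
  set d := |x - b| with hd'
  set e := |z - b| with he'
  have hd : 0 ≤ d := abs_nonneg _
  have he : 0 ≤ e := abs_nonneg _
  have hsq : (d - e)^2 ≤ (z - x)^2 := by
    have h1 : |d - e| ≤ |x - z| := by
      have h0 := abs_abs_sub_abs_le_abs_sub (x - b) (z - b)
      have h2 : (x - b) - (z - b) = x - z := by ring
      rw [h2] at h0
      exact h0
    calc (d - e)^2 = |d - e|^2 := (sq_abs _).symm
      _ ≤ |x - z|^2 := by exact pow_le_pow_left₀ (abs_nonneg _) h1 2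
      _ = (z - x)^2 := by rw [sq_abs]; ring
  rcases le_or_gt (x + lam) a with h | h
  · rw [min_eq_left h]
    nlinarith [sq_nonneg (d - e - lam)]
  · rw [min_eq_right h.le]
    nlinarith [sq_nonneg (d - e - (a - x)),
      mul_nonneg (sub_nonneg.2 h.le) he,
      mul_nonneg (sub_nonneg.2 ha) (sub_nonneg.2 hab)]

/-- Closed-form proximal mapping of the nonconvex piecewise-affine
regularizer (Section 3.1). The quantization values are `q 0 < q 1 < ⋯ < q m`
(so `m + 1 ≥ 2` values, matching the paper's `q_1 < ⋯ < q_m` with `m ≥ 2`),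
`Ψ z = min_{0 ≤ j ≤ m} |z − q j|` on `[q 0, q m]`, and
`Φ(z) = λΨ(z) + (1/2)(z − x)²` is minimized over `[q 0, q m]` at the indicated
clipped points, where `clip(t, a, b) = min (max t a) b`. -/
theorem prox_nonconvex_par
    (m : ℕ) (hm : 1 ≤ m)
    (q : ℕ → ℝ) (hqmono : ∀ k < m, q k < q (k + 1))
    (Ψ : ℝ → ℝ)
    (hΨ : ∀ z : ℝ, (∃ j ≤ m, Ψ z = |z - q j|) ∧ (∀ j ≤ m, Ψ z ≤ |z - q j|))
    (lam : ℝ) (hlam : 0 < lam)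
    (x : ℝ) (hx : x ∈ Set.Icc (q 0) (q m))
    (Φ : ℝ → ℝ) (hΦ : ∀ z, Φ z = lam * Ψ z + (1 / 2) * (z - x) ^ 2) :
    -- (i)
    (∀ k < m, q k ≤ x → x ≤ (q k + q (k + 1)) / 2 →
      ∀ z ∈ Set.Icc (q 0) (q m),
        Φ (min (max (x - lam) (q k)) ((q k + q (k + 1)) / 2)) ≤ Φ z) ∧
    -- (ii)
    (∀ k < m, (q k + q (k + 1)) / 2 ≤ x → x ≤ q (k + 1) →
      ∀ z ∈ Set.Icc (q 0) (q m),
        Φ (min (max (x + lam) ((q k + q (k + 1)) / 2)) (q (k + 1))) ≤ Φ z) := by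
  constructor
  · intro k hk hqkx hxmid z hz
    have hqk : q k < q (k + 1) := hqmono k hk
    set w := max (x - lam) (q k) with hw'
    have hwle : w ≤ (q k + q (k + 1)) / 2 := by
      apply max_le <;> [linarith; linarith]
    rw [min_eq_left hwle]
    -- distance from x to q j is at least x - q k, for every j ≤ m
    obtain ⟨j, hj, hΨz⟩ := (hΨ z).1
    have hab : x - q k ≤ |x - q j| := by
      rcases Nat.lt_or_ge j (k + 1) with hjk | hjk
      · have : q j ≤ q k := q_le_aux hqmono (by omega) (by omega)
        have := le_abs_self (x - q j)
        linarith
      · have : q (k + 1) ≤ q j := q_le_aux hqmono hjk hj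
        have := neg_le_abs (x - q j)
        linarith
    have hΨw : Ψ w ≤ w - q k := by
      have h1 := (hΨ w).2 k (by omega)
      have h2 : q k ≤ w := le_max_right _ _
      rwa [abs_of_nonneg (by linarith)] at h1
    have key := prox_aux_left lam x (q k) (q j) z hlam hqkx hab
    rw [hΦ w, hΦ z, hΨz]
    nlinarith [key]
  · intro k hk hmidx hxqk1 z hz
    have hqk : q k < q (k + 1) := hqmono k hk
    have hmax : max (x + lam) ((q k + q (k + 1)) / 2) = x + lam :=
      max_eq_left (by linarith)
    rw [hmax]
    set w := min (x + lam) (q (k + 1)) with hw'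
    obtain ⟨j, hj, hΨz⟩ := (hΨ z).1
    have hab : q (k + 1) - x ≤ |x - q j| := by
      rcases Nat.lt_or_ge j (k + 1) with hjk | hjk
      · have : q j ≤ q k := q_le_aux hqmono (by omega) (by omega)
        have := le_abs_self (x - q j)
        linarith
      · have : q (k + 1) ≤ q j := q_le_aux hqmono hjk hj
        have := neg_le_abs (x - q j)
        linarith
    have hΨw : Ψ w ≤ q (k + 1) - w := by
      have h1 := (hΨ w).2 (k + 1) (by omega)
      have h2 : w ≤ q (k + 1) := min_le_right _ _
      rw [abs_of_nonpos (by linarith), neg_sub] at h1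
      exact h1
    have key := prox_aux_right lam x (q (k + 1)) (q j) z hlam hxqk1 hab
    rw [hΦ w, hΦ z, hΨz]
    nlinarith [key]
end

section
/- Let m ≥ 2 and let q_1 < q_2 < ⋯ < q_m be real numbers. Define Ψ : [q_1, q_m] → ℝ by Ψ(z) = min_{1≤j≤m} |z − q_j|. Suppose λ ≥ (1/2)·max_{1≤k≤m−1}(q_{k+1} − q_k). Then for every x ∈ [q_1, q_m] and every p ∈ {q_1, …, q_m} with |x − p| = min_{1≤j≤m} |x − q_j| (i.e., p is a nearest quantization value to x), the point p is a global minimizer of Φ(z) = λΨ(z) + (1/2)(z − x)² over [q_1, q_m]. In other words, once λ exceeds half the maximum gap between consecutive quantization values, the proximal mapping of λΨ reduces to the exact nearest-point quantizer prox_{λΨ}(x) = argmin_{p ∈ Q} |x − p|. -/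
lemma exists_bracket_aux (m : ℕ) (q : ℕ → ℝ) (x : ℝ)
    (hm : 1 ≤ m) (hx1 : q 0 ≤ x) (hx2 : x ≤ q m) :
    ∃ k < m, q k ≤ x ∧ x ≤ q (k + 1) := by
  induction m with
  | zero => omega
  | succ n ih =>
    rcases le_or_gt x (q n) with h | h
    · rcases Nat.eq_zero_or_pos n with rfl | hn
      · exact ⟨0, by omega, hx1, hx2⟩
      · obtain ⟨k, hk, h1, h2⟩ := ih hn h
        exact ⟨k, by omega, h1, h2⟩
    · exact ⟨n, by omega, h.le, hx2⟩

/-- For the nonconvex piecewise-affine regularizer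
`Ψ z = min_{0 ≤ j ≤ m} |z − q j|` with quantization values `q 0 < ⋯ < q m`
(so `m + 1 ≥ 2` values, matching the paper's `q_1 < ⋯ < q_m` with `m ≥ 2`),
once `λ ≥ (1/2)·max_k (q (k+1) − q k)`, every nearest quantization value `p` to `x`
is a global minimizer of `Φ(z) = λΨ(z) + (1/2)(z − x)²` over `[q 0, q m]`:
the proximal mapping reduces to the exact nearest-point quantizer. -/
theorem prox_nonconvex_par_hard_quantizer
    (m : ℕ) (hm : 1 ≤ m)
    (q : ℕ → ℝ) (hqmono : ∀ k < m, q k < q (k + 1))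
    (Ψ : ℝ → ℝ)
    (hΨ : ∀ z : ℝ, (∃ j ≤ m, Ψ z = |z - q j|) ∧ (∀ j ≤ m, Ψ z ≤ |z - q j|))
    (lam : ℝ) (hlam : ∀ k < m, q (k + 1) - q k ≤ 2 * lam)
    (x : ℝ) (hx : x ∈ Set.Icc (q 0) (q m))
    (p : ℝ) (hp : ∃ j ≤ m, p = q j) (hnear : ∀ j ≤ m, |x - p| ≤ |x - q j|)
    (Φ : ℝ → ℝ) (hΦ : ∀ z, Φ z = lam * Ψ z + (1 / 2) * (z - x) ^ 2) :
    ∀ z ∈ Set.Icc (q 0) (q m), Φ p ≤ Φ z := by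
  intro z hz
  obtain ⟨jp, hjp, hpq⟩ := hp
  -- Ψ p = 0
  have hΨp : Ψ p = 0 := by
    have h1 : Ψ p ≤ 0 := by
      have := (hΨ p).2 jp hjp
      simpa [hpq] using this
    obtain ⟨j', hj', he⟩ := (hΨ p).1
    have h2 : 0 ≤ Ψ p := he ▸ abs_nonneg _
    linarith
  -- a ≤ lam : nearest distance is at most half the max gap
  have halam : |x - p| ≤ lam := by
    obtain ⟨k, hk, hk1, hk2⟩ := exists_bracket_aux m q x hm hx.1 hx.2
    have e1 : |x - q k| = x - q k := abs_of_nonneg (by linarith)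
    have e2 : |x - q (k + 1)| = q (k + 1) - x := by
      rw [abs_sub_comm]; exact abs_of_nonneg (by linarith)
    have n1 := hnear k (by omega)
    have n2 := hnear (k + 1) (by omega)
    have hg := hlam k hk
    rw [e1] at n1; rw [e2] at n2
    linarith
  obtain ⟨j, hj, hΨz⟩ := (hΨ z).1
  have hab : |x - p| ≤ |x - q j| := hnear j hj
  have htri : |x - q j| ≤ |x - z| + |z - q j| := abs_sub_le x z (q j)
  have ha : 0 ≤ |x - p| := abs_nonneg _
  have hc : 0 ≤ |z - q j| := abs_nonneg _
  have ht : 0 ≤ |x - z| := abs_nonneg _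
  have hsa : |x - p| ^ 2 = (p - x) ^ 2 := by rw [sq_abs]; ring
  have hst : |x - z| ^ 2 = (z - x) ^ 2 := by rw [sq_abs]; ring
  rw [hΦ p, hΦ z, hΨp, hΨz]
  rcases le_or_gt |x - p| |x - z| with h | h
  · nlinarith [sq_nonneg (|x - z| - |x - p|)]
  · have hl0 : 0 ≤ lam := ha.trans halam
    nlinarith [mul_nonneg (sub_nonneg.2 halam) (sub_nonneg.2 h.le),
      mul_nonneg (sub_nonneg.2 (show |x - p| ≤ |x - z| + |z - q j| by linarith)) hl0]
end
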